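/- arXiv:1902.07548 — 2 statements merged into one kernel-verified Lean document; each statement's English description precedes it below -/
import Mathlib

section
/- Let G be a finite simple graph on n vertices with m ≥ 1 edges, maximum vertex degree δ, and clique number w (the largest size of a complete subgraph). For real parameters q with 0 < q < 1 and r ≠ 1, the Sharma–Mittal entropy of G based on the signless Laplacian satisfies H_{q,r}(G) ≤ (1/(1−r))·[(n·((δ + n(1 − 1/w))/(2m))^q)^{(1−r)/(1−q)} − 1]. -/
open Finset

namespace SMG

variable {V : Type*} [Fintype V] [DecidableEq V]

/-- The degree sum of a graph. -/
def degSum (G : SimpleGraph V) [DecidableRel G.Adj] : ℕ := ∑ v, G.degree v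

/-- The signless Laplacian matrix `Q(G) = D(G) + A(G)` of a simple graph. -/
def signlessLapMatrix (G : SimpleGraph V) [DecidableRel G.Adj] : Matrix V V ℝ :=
  G.degMatrix ℝ + G.adjMatrix ℝ

/-- The signless Laplacian matrix of a simple graph is Hermitian. -/
lemma signlessLap_isHermitian (G : SimpleGraph V) [DecidableRel G.Adj] :
    (signlessLapMatrix G).IsHermitian := by
  refine Matrix.IsHermitian.add ?_ ?_
  · exact Matrix.isHermitian_diagonal _
  · rw [Matrix.IsHermitian, Matrix.conjTranspose_eq_transpose_of_trivial]
    exact G.isSymm_adjMatrix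

/-- The eigenvalues (with multiplicity) of the density matrix `ρ_Q(G) = Q(G)/d`,
namely `γ v = μ v / d`. -/
noncomputable def signlessLapDensityEigen (G : SimpleGraph V) [DecidableRel G.Adj] : V → ℝ :=
  fun v => (signlessLap_isHermitian G).eigenvalues v / (degSum G : ℝ)

/-- Sharma–Mittal entropy of a graph based on its signless Laplacian:
`H_{q,r}(G) = (1/(1-r)) * ((Σ γᵢ^q)^((1-r)/(1-q)) - 1)` with real powers. -/
noncomputable def signlessLapSM (G : SimpleGraph V) [DecidableRel G.Adj] (q r : ℝ) : ℝ :=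
  (1 / (1 - r)) *
    ((∑ v, signlessLapDensityEigen G v ^ q) ^ ((1 - r) / (1 - q)) - 1)


open Matrix SimpleGraph in
lemma signlessLap_toLinearMap₂' (G : SimpleGraph V) [DecidableRel G.Adj] (x : V → ℝ) :
    Matrix.toLinearMap₂' ℝ (signlessLapMatrix G) x x =
    (∑ i : V, ∑ j : V, if G.Adj i j then (x i + x j)^2 else 0) / 2 := by
  simp_rw [toLinearMap₂'_apply', signlessLapMatrix, add_mulVec, dotProduct_add,
    dotProduct_mulVec_degMatrix, dotProduct_mulVec_adjMatrix, ← sum_add_distrib,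
    degree_eq_sum_if_adj, sum_mul, ite_mul, one_mul, zero_mul, ← sum_add_distrib, ite_add_ite,
    add_zero]
  rw [← add_self_div_two (∑ x_1 : V, ∑ x_2 : V, _)]
  conv_lhs => enter [1,2,2,i,2,j]; rw [if_congr (adj_comm G i j) rfl rfl]
  conv_lhs => enter [1,2]; rw [Finset.sum_comm]
  simp_rw [← sum_add_distrib, ite_add_ite]
  congr 2 with i
  congr 2 with j
  ring_nf

lemma signlessLap_posSemidef (G : SimpleGraph V) [DecidableRel G.Adj] :
    (signlessLapMatrix G).PosSemidef := by
  refine Matrix.posSemidef_iff_dotProduct_mulVec.mpr ⟨signlessLap_isHermitian G, fun x => ?_⟩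
  rw [star_trivial, ← Matrix.toLinearMap₂'_apply', signlessLap_toLinearMap₂']
  positivity

lemma sum_eigenvalues_eq_trace {A : Matrix V V ℝ} (hA : A.IsHermitian) :
    ∑ i, hA.eigenvalues i = A.trace := by
  rw [hA.trace_eq_sum_eigenvalues]
  simp

lemma trace_signlessLap (G : SimpleGraph V) [DecidableRel G.Adj] :
    (signlessLapMatrix G).trace = (degSum G : ℝ) := by
  rw [signlessLapMatrix, Matrix.trace_add, SimpleGraph.trace_adjMatrix, add_zero,
    SimpleGraph.degMatrix, Matrix.trace_diagonal, degSum]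
  push_cast
  rfl

/-- Upper bound on the Sharma–Mittal entropy (signless Laplacian) in terms of the maximum
degree `δ` and the clique number `w`, for `0 < q < 1`:
`H_{q,r}(G) ≤ (1/(1−r))·[(n·((δ + n(1 − 1/w))/(2m))^q)^{(1−r)/(1−q)} − 1]`. -/
theorem signlessLapSM_le_maxDegree_cliqueNum (G : SimpleGraph V) [DecidableRel G.Adj]
    (m : ℕ) (hm : m = G.edgeFinset.card) (hm1 : 1 ≤ m)
    (q r : ℝ) (hq0 : 0 < q) (hq1 : q < 1) (hr : r ≠ 1) :
    signlessLapSM G q r ≤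
      (1 / (1 - r)) *
        (((Fintype.card V : ℝ) *
            (((G.maxDegree : ℝ) + (Fintype.card V : ℝ) * (1 - 1 / (G.cliqueNum : ℝ))) /
              (2 * m)) ^ q) ^ ((1 - r) / (1 - q)) - 1) := by
  classical
  have hm' : (1:ℝ) ≤ m := by exact_mod_cast hm1
  have hd : (degSum G : ℝ) = 2 * m := by
    rw [degSum, SimpleGraph.sum_degrees_eq_twice_card_edges, hm]; push_cast; ring
  have hdpos : (0:ℝ) < (degSum G : ℝ) := by rw [hd]; linarith
  unfold signlessLapSM
  set γ := signlessLapDensityEigen G with hγdef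
  have hγ0 : ∀ v, 0 ≤ γ v := fun v =>
    div_nonneg ((signlessLap_posSemidef G).eigenvalues_nonneg v) hdpos.le
  have hγsum : ∑ v, γ v = 1 := by
    rw [hγdef]; unfold signlessLapDensityEigen
    rw [← Finset.sum_div, sum_eigenvalues_eq_trace, trace_signlessLap, div_self hdpos.ne']
  have hn0 : 0 < Fintype.card V := by
    rcases Nat.eq_zero_or_pos (Fintype.card V) with h | h
    · have : IsEmpty V := Fintype.card_eq_zero_iff.mp h
      rw [Finset.univ_eq_empty, Finset.sum_empty] at hγsum
      norm_num at hγsum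
    · exact h
  set n : ℝ := (Fintype.card V : ℝ) with hndef
  have hnR : (0:ℝ) < n := by rw [hndef]; exact_mod_cast hn0
  have hw' : ∑ _v : V, (1/n) = 1 := by
    rw [Finset.sum_const, Finset.card_univ, nsmul_eq_mul, ← hndef]
    field_simp
  have hpq : (1:ℝ) ≤ 1/q := by rw [le_div_iff₀ hq0]; linarith
  have key : (∑ v, (1/n) * (γ v ^ q)) ^ (1/q) ≤ ∑ v, (1/n) * γ v :=
    calc (∑ v, (1/n) * (γ v ^ q)) ^ (1/q)
        ≤ ∑ v, (1/n) * (γ v ^ q) ^ (1/q) :=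
          Real.rpow_arith_mean_le_arith_mean_rpow Finset.univ _ _
            (fun i _ => by positivity) hw'
            (fun i _ => Real.rpow_nonneg (hγ0 i) q) hpq
      _ = ∑ v, (1/n) * γ v := by
          refine Finset.sum_congr rfl fun v _ => ?_
          rw [one_div q, Real.rpow_rpow_inv (hγ0 v) hq0.ne']
  rw [← Finset.mul_sum, ← Finset.mul_sum, hγsum, mul_one] at key
  have hS'0 : 0 ≤ ∑ v, γ v ^ q :=
    Finset.sum_nonneg fun v _ => Real.rpow_nonneg (hγ0 v) q
  have hS'0' : 0 ≤ (1/n) * ∑ v, γ v ^ q := by positivity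
  have hS' : (1/n) * ∑ v, γ v ^ q ≤ (1/n) ^ q := by
    calc (1/n) * ∑ v, γ v ^ q
        = (((1/n) * ∑ v, γ v ^ q) ^ (1/q)) ^ q := by
          rw [one_div q, Real.rpow_inv_rpow hS'0' hq0.ne']
      _ ≤ (1/n) ^ q := Real.rpow_le_rpow (Real.rpow_nonneg hS'0' _) key hq0.le
  have hSle : ∑ v, γ v ^ q ≤ n * (1/n) ^ q := by
    have h4 := mul_le_mul_of_nonneg_left hS' hnR.le
    calc ∑ v, γ v ^ q = n * ((1/n) * ∑ v, γ v ^ q) := by field_simp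
      _ ≤ n * (1/n) ^ q := h4
  set B : ℝ := ((G.maxDegree : ℝ) + n * (1 - 1 / (G.cliqueNum : ℝ))) / (2 * m) with hBdef
  have h2m : (0:ℝ) < 2 * m := by linarith
  have hsumdeg : (2 * m : ℝ) ≤ n * G.maxDegree := by
    rw [← hd, hndef]
    have h5 : degSum G ≤ Fintype.card V * G.maxDegree := by
      unfold degSum
      calc ∑ v, G.degree v ≤ ∑ _v : V, G.maxDegree :=
            Finset.sum_le_sum fun v _ => G.degree_le_maxDegree v
        _ = Fintype.card V * G.maxDegree := by
            rw [Finset.sum_const, Finset.card_univ, smul_eq_mul]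
    exact_mod_cast h5
  have hcl : (0:ℝ) ≤ 1 - 1 / (G.cliqueNum : ℝ) := by
    rcases Nat.eq_zero_or_pos G.cliqueNum with h | h
    · simp [h]
    · have h1 : (1:ℝ) ≤ (G.cliqueNum : ℝ) := by exact_mod_cast h
      have h2 : 1 / (G.cliqueNum : ℝ) ≤ 1 := by
        rw [div_le_one (by linarith)]; linarith
      linarith
  have hBge : 1/n ≤ B := by
    rw [hBdef, div_le_div_iff₀ hnR h2m]
    nlinarith [mul_nonneg (mul_nonneg hnR.le hcl) hnR.le]
  have hST : ∑ v, γ v ^ q ≤ n * B ^ q :=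
    hSle.trans (mul_le_mul_of_nonneg_left
      (Real.rpow_le_rpow (by positivity) hBge hq0.le) hnR.le)
  have hS0 : 0 < ∑ v, γ v ^ q := by
    have hex : ∃ v, 0 < γ v := by
      by_contra h
      push_neg at h
      have h0 : ∑ v, γ v = 0 :=
        Finset.sum_eq_zero fun v _ => le_antisymm (h v) (hγ0 v)
      rw [hγsum] at h0; norm_num at h0
    obtain ⟨v, hv⟩ := hex
    exact Finset.sum_pos' (fun i _ => Real.rpow_nonneg (hγ0 i) q)
      ⟨v, Finset.mem_univ v, Real.rpow_pos_of_pos hv q⟩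
  set e : ℝ := (1 - r) / (1 - q) with hedef
  rcases lt_or_gt_of_ne hr with hlt | hgt
  · have he : 0 ≤ e := div_nonneg (by linarith) (by linarith)
    have hpow : (∑ v, γ v ^ q) ^ e ≤ (n * B ^ q) ^ e :=
      Real.rpow_le_rpow hS0.le hST he
    have h1r : 0 < 1/(1 - r) := div_pos one_pos (by linarith)
    exact mul_le_mul_of_nonneg_left (by linarith) h1r.le
  · have he : e ≤ 0 := div_nonpos_of_nonpos_of_nonneg (by linarith) (by linarith)
    have hpow : (n * B ^ q) ^ e ≤ (∑ v, γ v ^ q) ^ e :=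
      Real.rpow_le_rpow_of_nonpos hS0 hST he
    have h1r : 1/(1 - r) ≤ 0 := le_of_lt (div_neg_of_pos_of_neg one_pos (by linarith))
    nlinarith [mul_nonneg (neg_nonneg.mpr h1r) (sub_nonneg.mpr hpow)]

end SMG
end

section
/- Let G₁ be a connected finite simple graph on n₁ ≥ 2 vertices u₁,…,u_{n₁} with Laplacian eigenvalues λ⁽¹⁾₁,…,λ⁽¹⁾_{n₁}, and let G₂ be any finite simple graph on n₂ vertices with Laplacian eigenvalues λ⁽²⁾₁ ≤ λ⁽²⁾₂ ≤ … ≤ λ⁽²⁾_{n₂} listed in nondecreasing order (so λ⁽²⁾₁ = 0). Let G = G₁ • G₂ be their lexicographic product and let d be the degree sum of G. For real parameters q > 0, q ≠ 1 and r ≠ 1, the Sharma–Mittal entropy of G based on the Laplacian satisfies H_{q,r}(G) = (1/(1−r))·[(1/d)^{q(1−r)/(1−q)}·(Σ_{i=1}^{n₁} (n₂·λ⁽¹⁾ᵢ)^q + Σ_{j=2}^{n₂} Σ_{i=1}^{n₁} (λ⁽²⁾ⱼ + n₂·deg_{G₁}(uᵢ))^q)^{(1−r)/(1−q)} − 1].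 -/
open Finset

namespace SMG

variable {V : Type*} [Fintype V] [DecidableEq V]

/-- The Laplacian matrix of a simple graph is Hermitian. -/
lemma lap_isHermitian (G : SimpleGraph V) [DecidableRel G.Adj] :
    (G.lapMatrix ℝ).IsHermitian :=
  (SimpleGraph.posSemidef_lapMatrix ℝ G).isHermitian

/-- The eigenvalues (with multiplicity) of the density matrix `ρ_L(G) = L(G)/d`,
namely `γ v = λ v / d`. -/
noncomputable def lapDensityEigen (G : SimpleGraph V) [DecidableRel G.Adj] : V → ℝ :=
  fun v => (lap_isHermitian G).eigenvalues v / (degSum G : ℝ)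

/-- Sharma–Mittal entropy of a graph based on its (combinatorial) Laplacian:
`H_{q,r}(G) = (1/(1-r)) * ((Σ γᵢ^q)^((1-r)/(1-q)) - 1)` with real powers. -/
noncomputable def lapSM (G : SimpleGraph V) [DecidableRel G.Adj] (q r : ℝ) : ℝ :=
  (1 / (1 - r)) *
    ((∑ v, lapDensityEigen G v ^ q) ^ ((1 - r) / (1 - q)) - 1)


/-- The lexicographic product of two simple graphs: `(u,v) ~ (u',v')` iff `u ~ u'` in `G₁`,
or `u = u'` and `v ~ v'` in `G₂`. -/
def lexProd {V₁ V₂ : Type*} (G₁ : SimpleGraph V₁) (G₂ : SimpleGraph V₂) :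
    SimpleGraph (V₁ × V₂) where
  Adj x y := G₁.Adj x.1 y.1 ∨ (x.1 = y.1 ∧ G₂.Adj x.2 y.2)
  symm := by
    constructor
    rintro x y (h | ⟨h1, h2⟩)
    · exact Or.inl h.symm
    · exact Or.inr ⟨h1.symm, h2.symm⟩
  loopless := by
    constructor
    rintro x (h | ⟨_, h2⟩)
    · exact G₁.irrefl h
    · exact G₂.irrefl h2

instance {V₁ V₂ : Type*} (G₁ : SimpleGraph V₁) (G₂ : SimpleGraph V₂)
    [DecidableRel G₁.Adj] [DecidableRel G₂.Adj] [DecidableEq V₁] :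
    DecidableRel (lexProd G₁ G₂).Adj := fun _ _ =>
  inferInstanceAs (Decidable (_ ∨ _))

section Aux

open Polynomial Matrix

variable {n m o : Type*} [Fintype n] [DecidableEq n] [Fintype m] [DecidableEq m]
  [Fintype o] [DecidableEq o]
variable {R : Type*} [CommRing R]

lemma charpoly_conj (P Pinv M : Matrix n n R) (h1 : P * Pinv = 1) (h2 : Pinv * P = 1) :
    (P * M * Pinv).charpoly = M.charpoly := by
  have key : charmatrix (P * M * Pinv) =
      (P.map C) * charmatrix M * (Pinv.map C) := by
    show Matrix.scalar n (X : R[X]) - _ = _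
    have hsc : (P.map C) * Matrix.scalar n (X : R[X]) * (Pinv.map C) =
        Matrix.scalar n (X : R[X]) := by
      rw [(Matrix.scalar_commute (X : R[X]) (fun r => Commute.all _ _) (P.map C)).symm.eq,
        Matrix.mul_assoc, ← Matrix.map_mul, h1]
      simp
    have hmm : (C : R →+* R[X]).mapMatrix (P * M * Pinv)
        = (P.map C) * ((C : R →+* R[X]).mapMatrix M) * (Pinv.map C) := by
      simp [RingHom.mapMatrix_apply, Matrix.map_mul]
    rw [hmm, ← hsc]
    show _ = (P.map C) * (Matrix.scalar n (X : R[X]) - _) * (Pinv.map C)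
    rw [Matrix.mul_sub, Matrix.sub_mul]
  rw [Matrix.charpoly, key, Matrix.det_mul, Matrix.det_mul, mul_comm, ← mul_assoc,
    ← Matrix.det_mul, ← Matrix.map_mul, h2]
  simp [Matrix.charpoly]

lemma charpoly_diagonal (v : n → R) :
    (Matrix.diagonal v).charpoly = ∏ i, (X - C (v i)) := by
  have : charmatrix (Matrix.diagonal v) = Matrix.diagonal (fun i => X - C (v i)) := by
    ext i j
    by_cases h : i = j
    · subst h; simp
    · rw [charmatrix_apply_ne _ _ _ h, Matrix.diagonal_apply_ne _ h,
        Matrix.diagonal_apply_ne _ h]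
      simp
  rw [Matrix.charpoly, this, Matrix.det_diagonal]

lemma charpoly_blockDiagonal (M : o → Matrix m m R) :
    (Matrix.blockDiagonal M).charpoly = ∏ k, (M k).charpoly := by
  have : charmatrix (Matrix.blockDiagonal M) =
      Matrix.blockDiagonal (fun k => charmatrix (M k)) := by
    ext ⟨i, k⟩ ⟨j, k'⟩
    by_cases h : (i, k) = (j, k')
    · rw [h, charmatrix_apply_eq]
      simp [Matrix.blockDiagonal_apply, charmatrix_apply_eq]
    · rw [charmatrix_apply_ne _ _ _ h]
      by_cases hk : k = k'
      · subst hk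
        have hij : i ≠ j := fun hij => h (by rw [hij])
        simp [Matrix.blockDiagonal_apply, charmatrix_apply_ne _ _ _ hij]
      · simp [Matrix.blockDiagonal_apply, hk]
  rw [Matrix.charpoly, this, Matrix.det_blockDiagonal]
  rfl

lemma charpoly_smul_one_add (c : R) (M : Matrix n n R) :
    (c • (1 : Matrix n n R) + M).charpoly = M.charpoly.comp (X - C c) := by
  have hφ : ∀ p : R[X], p.comp (X - C c) = eval₂RingHom C (X - C c) p := fun p => rfl
  have key : charmatrix (c • (1 : Matrix n n R) + M) =
      (charmatrix M).map (eval₂RingHom C (X - C c)) := by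
    ext i j
    by_cases h : i = j
    · subst h
      simp [charmatrix_apply_eq, Matrix.one_apply]
      ring
    · rw [charmatrix_apply_ne _ _ _ h, Matrix.map_apply, charmatrix_apply_ne _ _ _ h]
      simp [Matrix.one_apply_ne h, h]
  rw [Matrix.charpoly, key, Matrix.charpoly, hφ, RingHom.map_det, RingHom.mapMatrix_apply]

lemma charpoly_smul_of_factors {F : Type*} [Field F] (c : F) (hc : c ≠ 0)
    (M : Matrix n n F) (f : n → F) (h : M.charpoly = ∏ i, (X - C (f i))) :
    (c • M).charpoly = ∏ i, (X - C (c * f i)) := by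
  have key : charmatrix (c • M) =
      (C c) • ((charmatrix M).map (eval₂RingHom C (C c⁻¹ * X))) := by
    ext i j
    by_cases hij : i = j
    · subst hij
      rw [Matrix.smul_apply, charmatrix_apply_eq, Matrix.smul_apply, Matrix.map_apply,
        charmatrix_apply_eq, smul_eq_mul, smul_eq_mul, coe_eval₂RingHom, eval₂_sub,
        eval₂_X, eval₂_C, mul_sub, ← mul_assoc, ← C_mul, mul_inv_cancel₀ hc, C_1,
        one_mul, ← C_mul]
    · rw [charmatrix_apply_ne _ _ _ hij, Matrix.smul_apply, Matrix.smul_apply,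
        Matrix.map_apply, charmatrix_apply_ne _ _ _ hij, smul_eq_mul, smul_eq_mul,
        coe_eval₂RingHom, eval₂_neg, eval₂_C, mul_neg, ← C_mul]
  rw [Matrix.charpoly, key, Matrix.det_smul, ← RingHom.mapMatrix_apply, ← RingHom.map_det]
  rw [show (charmatrix M).det = M.charpoly from rfl, h, map_prod]
  rw [← Finset.card_univ, ← Finset.prod_const, ← Finset.prod_mul_distrib]
  refine Finset.prod_congr rfl fun i _ => ?_
  simp only [map_sub, coe_eval₂RingHom, eval₂_X, eval₂_C]
  rw [mul_sub, ← mul_assoc, ← C_mul, mul_inv_cancel₀ hc, ← C_mul]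
  simp

lemma isHermitian_charpoly_eq {A : Matrix n n ℝ} (hA : A.IsHermitian) :
    A.charpoly = ∏ i, (X - C (hA.eigenvalues i)) := by
  have hU := hA.spectral_theorem
  have h1 : (hA.eigenvectorUnitary : Matrix n n ℝ) * (star hA.eigenvectorUnitary : Matrix n n ℝ) = 1 :=
    (Unitary.mem_iff.mp hA.eigenvectorUnitary.2).2
  have h2 : (star hA.eigenvectorUnitary : Matrix n n ℝ) * (hA.eigenvectorUnitary : Matrix n n ℝ) = 1 :=
    (Unitary.mem_iff.mp hA.eigenvectorUnitary.2).1
  calc A.charpoly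
      = ((hA.eigenvectorUnitary : Matrix n n ℝ) *
          Matrix.diagonal (RCLike.ofReal ∘ hA.eigenvalues) *
          (star hA.eigenvectorUnitary : Matrix n n ℝ)).charpoly := by exact congrArg Matrix.charpoly hU
    _ = (Matrix.diagonal (RCLike.ofReal ∘ hA.eigenvalues)).charpoly :=
        charpoly_conj _ _ _ h1 h2
    _ = ∏ i, (X - C (hA.eigenvalues i)) := by
        rw [charpoly_diagonal]
        simp

lemma multiset_map_eq_of_prod_eq {α β : Type*} [Fintype α] [Fintype β]
    (f : α → ℝ) (g : β → ℝ)
    (h : ∏ a, (X - C (f a)) = ∏ b, (X - C (g b))) :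
    Multiset.map f Finset.univ.val = Multiset.map g Finset.univ.val := by
  have hf : ∏ a, (X - C (f a)) =
      ((Multiset.map f Finset.univ.val).map (fun x : ℝ => X - C x)).prod := by
    rw [Multiset.map_map]; rfl
  have hg : ∏ b, (X - C (g b)) =
      ((Multiset.map g Finset.univ.val).map (fun x : ℝ => X - C x)).prod := by
    rw [Multiset.map_map]; rfl
  have := congrArg Polynomial.roots (hf ▸ hg ▸ h)
  rwa [roots_multiset_prod_X_sub_C, roots_multiset_prod_X_sub_C] at this



section Qmat
variable {n₂ : ℕ} [NeZero n₂]

/-- Invertible matrix with first column all ones, other columns standard basis. -/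
def Qmat (n₂ : ℕ) [NeZero n₂] : Matrix (Fin n₂) (Fin n₂) ℝ :=
  Matrix.of fun j k => if k = 0 then 1 else if j = k then 1 else 0

/-- Inverse of `Qmat`. -/
def Qinv (n₂ : ℕ) [NeZero n₂] : Matrix (Fin n₂) (Fin n₂) ℝ :=
  Matrix.of fun j k => if k = 0 then (if j = 0 then 1 else -1) else if j = k then 1 else 0

lemma Qmat_mul_Qinv : Qmat n₂ * Qinv n₂ = 1 := by
  ext j k
  rw [Matrix.mul_apply]
  by_cases hk : k = 0
  · subst hk
    by_cases hj : j = 0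
    · subst hj
      rw [Finset.sum_eq_single 0]
      · simp [Qmat, Qinv]
      · intro a _ ha
        simp [Qmat, Qinv, ha, Ne.symm ha]
      · simp
    · have : ∀ a : Fin n₂, Qmat n₂ j a * Qinv n₂ a 0 =
          (if a = 0 then (1:ℝ) else 0) + (if a = j then -1 else 0) := by
        intro a
        by_cases ha : a = 0
        · subst ha; simp [Qmat, Qinv, Ne.symm hj]
        · by_cases haj : a = j
          · subst haj; simp [Qmat, Qinv, ha]
          · simp [Qmat, Qinv, ha, haj, Ne.symm haj]
      rw [Finset.sum_congr rfl fun a _ => this a, Finset.sum_add_distrib]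
      simp [Finset.sum_ite_eq', Matrix.one_apply, hj]
  · have : ∀ a : Fin n₂, Qmat n₂ j a * Qinv n₂ a k = if a = k then (if j = k then (1:ℝ) else 0) else 0 := by
      intro a
      by_cases hak : a = k
      · subst hak; simp [Qmat, Qinv, hk]
      · simp [Qmat, Qinv, hak, hk]
    rw [Finset.sum_congr rfl fun a _ => this a]
    simp [Finset.sum_ite_eq', Matrix.one_apply]

lemma Qinv_mul_Qmat : Qinv n₂ * Qmat n₂ = 1 := by
  ext j k
  rw [Matrix.mul_apply]
  by_cases hk : k = 0
  · subst hk
    have : ∀ a : Fin n₂, Qinv n₂ j a * Qmat n₂ a 0 = Qinv n₂ j a := by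
      intro a; simp [Qmat]
    rw [Finset.sum_congr rfl fun a _ => this a]
    by_cases hj : j = 0
    · subst hj
      rw [Finset.sum_eq_single 0] <;> simp [Qinv]
      intro a ha; simp [Qinv, ha, Ne.symm ha]
    · have : ∀ a : Fin n₂, Qinv n₂ j a =
          (if a = 0 then (-1:ℝ) else 0) + (if a = j then 1 else 0) := by
        intro a
        by_cases ha : a = 0
        · subst ha; simp [Qinv, hj, Ne.symm hj]
        · by_cases haj : a = j
          · subst haj; simp [Qinv, ha]
          · simp [Qinv, ha, haj, Ne.symm haj]
      rw [Finset.sum_congr rfl fun a _ => this a, Finset.sum_add_distrib]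
      simp [Finset.sum_ite_eq', Matrix.one_apply, hj]
  · have : ∀ a : Fin n₂, Qinv n₂ j a * Qmat n₂ a k = if a = k then (if j = k then (1:ℝ) else 0) else 0 := by
      intro a
      by_cases hak : a = k
      · subst hak; simp [Qmat, Qinv, hk]
      · simp [Qmat, Qinv, hak, hk]
    rw [Finset.sum_congr rfl fun a _ => this a]
    simp [Finset.sum_ite_eq', Matrix.one_apply]

lemma lap_rowsum (G : SimpleGraph (Fin n₂)) [DecidableRel G.Adj] (a : Fin n₂) :
    ∑ b, G.lapMatrix ℝ a b = 0 := by
  have := congrFun (G.lapMatrix_mulVec_const_eq_zero (R := ℝ)) a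
  simpa [Matrix.mulVec, dotProduct] using this

/-- The all-ones matrix. -/
def Jmat (n₂ : ℕ) : Matrix (Fin n₂) (Fin n₂) ℝ := Matrix.of fun _ _ => 1

/-- Conjugated Laplacian of `G₂`. -/
noncomputable def Nmat (G : SimpleGraph (Fin n₂)) [DecidableRel G.Adj] :
    Matrix (Fin n₂) (Fin n₂) ℝ :=
  Qinv n₂ * (G.lapMatrix ℝ * Qmat n₂)

lemma lap_mul_Qmat (G : SimpleGraph (Fin n₂)) [DecidableRel G.Adj] (a k : Fin n₂) :
    (G.lapMatrix ℝ * Qmat n₂) a k = if k = 0 then 0 else G.lapMatrix ℝ a k := by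
  rw [Matrix.mul_apply]
  by_cases hk : k = 0
  · subst hk
    simp only [Qmat, Matrix.of_apply, if_pos rfl]
    simpa using lap_rowsum G a
  · have : ∀ b : Fin n₂, G.lapMatrix ℝ a b * Qmat n₂ b k =
        if b = k then G.lapMatrix ℝ a k else 0 := by
      intro b
      by_cases hbk : b = k
      · subst hbk; simp [Qmat, hk]
      · simp [Qmat, hbk, hk]
    rw [Finset.sum_congr rfl fun b _ => this b]
    simp [hk]

lemma Nmat_apply (G : SimpleGraph (Fin n₂)) [DecidableRel G.Adj] (j k : Fin n₂) :
    Nmat G j k = if k = 0 then 0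
      else G.lapMatrix ℝ j k - if j = 0 then 0 else G.lapMatrix ℝ 0 k := by
  rw [Nmat, Matrix.mul_apply]
  by_cases hk : k = 0
  · subst hk; simp [lap_mul_Qmat]
  · by_cases hj : j = 0
    · subst hj
      rw [Finset.sum_eq_single 0]
      · simp [Qinv, lap_mul_Qmat, hk]
      · intro a _ ha; simp [Qinv, ha, Ne.symm ha]
      · simp
    · have : ∀ a : Fin n₂, Qinv n₂ j a * (G.lapMatrix ℝ * Qmat n₂) a k =
          (if a = 0 then -G.lapMatrix ℝ 0 k else 0) +
            (if a = j then G.lapMatrix ℝ j k else 0) := by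
        intro a
        by_cases ha : a = 0
        · subst ha; simp [Qinv, hj, Ne.symm hj, lap_mul_Qmat, hk]
        · by_cases haj : a = j
          · subst haj; simp [Qinv, ha, Ne.symm ha, lap_mul_Qmat, hk]
          · simp [Qinv, ha, haj, Ne.symm haj]
      rw [Finset.sum_congr rfl fun a _ => this a, Finset.sum_add_distrib]
      simp [Finset.sum_ite_eq', hj, hk]
      ring

/-- Conjugated all-ones matrix. -/
def Kmat (n₂ : ℕ) [NeZero n₂] : Matrix (Fin n₂) (Fin n₂) ℝ :=
  Qinv n₂ * (Jmat n₂ * Qmat n₂)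

lemma Kmat_apply (j k : Fin n₂) :
    Kmat n₂ j k = if j = 0 then (if k = 0 then (n₂ : ℝ) else 1) else 0 := by
  have hJQ : ∀ a k : Fin n₂, (Jmat n₂ * Qmat n₂) a k = if k = 0 then (n₂ : ℝ) else 1 := by
    intro a k
    rw [Matrix.mul_apply]
    by_cases hk : k = 0
    · subst hk; simp [Jmat, Qmat]
    · have : ∀ b : Fin n₂, Jmat n₂ a b * Qmat n₂ b k = if b = k then 1 else 0 := by
        intro b
        by_cases hbk : b = k
        · subst hbk; simp [Jmat, Qmat, hk]
        · simp [Jmat, Qmat, hbk, hk]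
      rw [Finset.sum_congr rfl fun b _ => this b]
      simp [hk]
  rw [Kmat, Matrix.mul_apply]
  have : ∀ a : Fin n₂, Qinv n₂ j a * (Jmat n₂ * Qmat n₂) a k =
      Qinv n₂ j a * (if k = 0 then (n₂ : ℝ) else 1) := by
    intro a; rw [hJQ]
  rw [Finset.sum_congr rfl fun a _ => this a, ← Finset.sum_mul]
  have hsum : ∑ a, Qinv n₂ j a = if j = 0 then (1:ℝ) else 0 := by
    by_cases hj : j = 0
    · subst hj
      rw [Finset.sum_eq_single 0]
      · simp [Qinv]
      · intro a _ ha; simp [Qinv, ha, Ne.symm ha]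
      · simp
    · have : ∀ a : Fin n₂, Qinv n₂ j a =
          (if a = 0 then (-1:ℝ) else 0) + (if a = j then 1 else 0) := by
        intro a
        by_cases ha : a = 0
        · subst ha; simp [Qinv, hj, Ne.symm hj]
        · by_cases haj : a = j
          · subst haj; simp [Qinv, ha, Ne.symm ha]
          · simp [Qinv, ha, haj, Ne.symm haj]
      rw [Finset.sum_congr rfl fun a _ => this a, Finset.sum_add_distrib]
      simp [Finset.sum_ite_eq', hj]
  rw [hsum]
  by_cases hj : j = 0 <;> simp [hj]

open scoped Kronecker

lemma degree_lexProd {n₁ : ℕ} (G₁ : SimpleGraph (Fin n₁)) (G₂ : SimpleGraph (Fin n₂))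
    [DecidableRel G₁.Adj] [DecidableRel G₂.Adj] (u : Fin n₁) (j : Fin n₂) :
    (lexProd G₁ G₂).degree (u, j) = n₂ * G₁.degree u + G₂.degree j := by
  classical
  have hset : (lexProd G₁ G₂).neighborFinset (u, j) =
      (G₁.neighborFinset u ×ˢ Finset.univ) ∪ ({u} ×ˢ G₂.neighborFinset j) := by
    ext ⟨u', j'⟩
    simp only [SimpleGraph.mem_neighborFinset, Finset.mem_union, Finset.mem_product,
      Finset.mem_singleton, Finset.mem_univ, and_true, SimpleGraph.mem_neighborFinset]
    constructor
    · rintro (h | ⟨h1, h2⟩)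
      · exact Or.inl h
      · exact Or.inr ⟨h1.symm, h2⟩
    · rintro (h | ⟨h1, h2⟩)
      · exact Or.inl h
      · exact Or.inr ⟨h1.symm, h2⟩
  have hdisj : Disjoint (G₁.neighborFinset u ×ˢ (Finset.univ : Finset (Fin n₂)))
      (({u} : Finset (Fin n₁)) ×ˢ G₂.neighborFinset j) := by
    rw [Finset.disjoint_left]
    rintro ⟨u', j'⟩ h1 h2
    rw [Finset.mem_product] at h1 h2
    rw [Finset.mem_singleton] at h2
    rw [SimpleGraph.mem_neighborFinset] at h1
    exact G₁.ne_of_adj h1.1 h2.1.symm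
  rw [SimpleGraph.degree, hset, Finset.card_union_of_disjoint hdisj,
    Finset.card_product, Finset.card_product, Finset.card_singleton, one_mul,
    Finset.card_univ, Fintype.card_fin, Nat.mul_comm]
  rfl

lemma lapMatrix_lexProd {n₁ : ℕ} (G₁ : SimpleGraph (Fin n₁)) (G₂ : SimpleGraph (Fin n₂))
    [DecidableRel G₁.Adj] [DecidableRel G₂.Adj] :
    (lexProd G₁ G₂).lapMatrix ℝ =
      (n₂ : ℝ) • (G₁.degMatrix ℝ ⊗ₖ (1 : Matrix (Fin n₂) (Fin n₂) ℝ))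
        + (1 : Matrix (Fin n₁) (Fin n₁) ℝ) ⊗ₖ G₂.lapMatrix ℝ
        - G₁.adjMatrix ℝ ⊗ₖ Jmat n₂ := by
  classical
  ext ⟨u, j⟩ ⟨u', j'⟩
  simp only [SimpleGraph.lapMatrix, SimpleGraph.degMatrix, Matrix.sub_apply, Matrix.add_apply,
    Matrix.smul_apply, Matrix.kroneckerMap_apply, Matrix.diagonal_apply,
    SimpleGraph.adjMatrix_apply, Matrix.one_apply, Jmat, Matrix.of_apply, smul_eq_mul]
  by_cases hu : u = u'
  · subst hu
    by_cases hj : j = j'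
    · subst hj
      have hadj : ¬ (lexProd G₁ G₂).Adj (u, j) (u, j) := (lexProd G₁ G₂).irrefl
      have h1 : ¬ G₁.Adj u u := G₁.irrefl
      have h2 : ¬ G₂.Adj j j := G₂.irrefl
      simp only [if_pos rfl, if_neg hadj, if_neg h1, if_neg h2]
      rw [degree_lexProd]
      push_cast
      ring
    · have hne : (u, j) ≠ (u, j') := by simp [hj]
      have hadj : (lexProd G₁ G₂).Adj (u, j) (u, j') ↔ G₂.Adj j j' := by
        constructor
        · rintro (h | ⟨_, h2⟩)
          · exact absurd h G₁.irrefl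
          · exact h2
        · intro h; exact Or.inr ⟨rfl, h⟩
      have h1 : ¬ G₁.Adj u u := G₁.irrefl
      simp only [if_neg hne, if_neg hj, if_pos rfl, if_neg h1]
      by_cases h2 : G₂.Adj j j'
      · rw [if_pos (hadj.mpr h2), if_pos h2]; simp
      · rw [if_neg (fun h => h2 (hadj.mp h)), if_neg h2]; simp
  · have hne : (u, j) ≠ (u', j') := by simp [hu]
    have hadj : (lexProd G₁ G₂).Adj (u, j) (u', j') ↔ G₁.Adj u u' := by
      constructor
      · rintro (h | ⟨h1, _⟩)
        · exact h
        · exact absurd h1 hu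
      · intro h; exact Or.inl h
    simp only [if_neg hne, if_neg hu]
    by_cases h1 : G₁.Adj u u'
    · rw [if_pos (hadj.mpr h1), if_pos h1]; simp [hu]
    · rw [if_neg (fun h => h1 (hadj.mp h)), if_neg h1]; simp [hu]

/-- Nonzero indices of `Fin n₂`. -/
abbrev Sub0 (n₂ : ℕ) [NeZero n₂] : Type := {j : Fin n₂ // j ≠ 0}

/-- `Nmat` restricted to nonzero indices. -/
noncomputable def Nres (G₂ : SimpleGraph (Fin n₂)) [DecidableRel G₂.Adj] :
    Matrix (Sub0 n₂) (Sub0 n₂) ℝ :=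
  Matrix.of fun s t => Nmat G₂ s.1 t.1

/-- Reindexing equivalence for the block structure. -/
def lexEquiv (n₁ n₂ : ℕ) [NeZero n₂] : Fin n₁ × Fin n₂ ≃ Fin n₁ ⊕ (Sub0 n₂ × Fin n₁) where
  toFun x := if h : x.2 = 0 then Sum.inl x.1 else Sum.inr (⟨x.2, h⟩, x.1)
  invFun y := Sum.elim (fun u => (u, 0)) (fun p => (p.2, p.1.1)) y
  left_inv := by rintro ⟨u, j⟩; by_cases h : j = 0 <;> simp [h]
  right_inv := by
    rintro (u | ⟨s, u⟩)
    · simp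
    · exact dif_neg s.2

variable {n₁ : ℕ}

/-- The conjugated Laplacian of the lexicographic product. -/
noncomputable def conjLap (G₁ : SimpleGraph (Fin n₁)) (G₂ : SimpleGraph (Fin n₂))
    [DecidableRel G₁.Adj] [DecidableRel G₂.Adj] : Matrix (Fin n₁ × Fin n₂) (Fin n₁ × Fin n₂) ℝ :=
  ((1 : Matrix (Fin n₁) (Fin n₁) ℝ) ⊗ₖ Qinv n₂) * ((lexProd G₁ G₂).lapMatrix ℝ) *
    ((1 : Matrix (Fin n₁) (Fin n₁) ℝ) ⊗ₖ Qmat n₂)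

lemma charpoly_conjLap (G₁ : SimpleGraph (Fin n₁)) (G₂ : SimpleGraph (Fin n₂))
    [DecidableRel G₁.Adj] [DecidableRel G₂.Adj] :
    (conjLap G₁ G₂).charpoly = ((lexProd G₁ G₂).lapMatrix ℝ).charpoly := by
  apply charpoly_conj
  · rw [← Matrix.mul_kronecker_mul, Matrix.one_mul, Qinv_mul_Qmat, Matrix.one_kronecker_one]
  · rw [← Matrix.mul_kronecker_mul, Matrix.one_mul, Qmat_mul_Qinv, Matrix.one_kronecker_one]

lemma conjLap_eq (G₁ : SimpleGraph (Fin n₁)) (G₂ : SimpleGraph (Fin n₂))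
    [DecidableRel G₁.Adj] [DecidableRel G₂.Adj] :
    conjLap G₁ G₂ =
      (n₂ : ℝ) • (G₁.degMatrix ℝ ⊗ₖ (1 : Matrix (Fin n₂) (Fin n₂) ℝ))
        + (1 : Matrix (Fin n₁) (Fin n₁) ℝ) ⊗ₖ Nmat G₂
        - G₁.adjMatrix ℝ ⊗ₖ Kmat n₂ := by
  rw [conjLap, lapMatrix_lexProd, Matrix.mul_sub, Matrix.sub_mul, Matrix.mul_add,
    Matrix.add_mul, Matrix.mul_smul, Matrix.smul_mul]
  congr 1
  · congr 1
    · simp only [← Matrix.mul_kronecker_mul, Matrix.one_mul, Matrix.mul_one, Qinv_mul_Qmat]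
    · simp only [← Matrix.mul_kronecker_mul, Matrix.one_mul, Matrix.mul_one]
      rw [Nmat, Matrix.mul_assoc]
  · simp only [← Matrix.mul_kronecker_mul, Matrix.one_mul, Matrix.mul_one]
    rw [Kmat, Matrix.mul_assoc]

lemma conjLap_apply (G₁ : SimpleGraph (Fin n₁)) (G₂ : SimpleGraph (Fin n₂))
    [DecidableRel G₁.Adj] [DecidableRel G₂.Adj] (u u' : Fin n₁) (j j' : Fin n₂) :
    conjLap G₁ G₂ (u, j) (u', j') =
      (n₂ : ℝ) * ((if u = u' then (G₁.degree u : ℝ) else 0) * (if j = j' then 1 else 0))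
        + (if u = u' then 1 else 0) * Nmat G₂ j j'
        - (if G₁.Adj u u' then 1 else 0) * Kmat n₂ j j' := by
  rw [conjLap_eq]
  simp only [Matrix.sub_apply, Matrix.add_apply, Matrix.smul_apply,
    Matrix.kroneckerMap_apply, SimpleGraph.degMatrix, Matrix.diagonal_apply,
    Matrix.one_apply, SimpleGraph.adjMatrix_apply, smul_eq_mul]

/-- The `B`-block of the conjugated Laplacian. -/
noncomputable def Bblk (G₁ : SimpleGraph (Fin n₁)) (G₂ : SimpleGraph (Fin n₂))
    [DecidableRel G₁.Adj] [DecidableRel G₂.Adj] : Matrix (Fin n₁) (Sub0 n₂ × Fin n₁) ℝ :=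
  Matrix.of fun u p => conjLap G₁ G₂ (u, 0) (p.2, p.1.1)

lemma reindex_conjLap (G₁ : SimpleGraph (Fin n₁)) (G₂ : SimpleGraph (Fin n₂))
    [DecidableRel G₁.Adj] [DecidableRel G₂.Adj] :
    Matrix.reindex (lexEquiv n₁ n₂) (lexEquiv n₁ n₂) (conjLap G₁ G₂) =
      Matrix.fromBlocks ((n₂ : ℝ) • G₁.lapMatrix ℝ) (Bblk G₁ G₂) 0
        (Matrix.blockDiagonal fun u : Fin n₁ =>
          ((n₂ : ℝ) * (G₁.degree u : ℝ)) • (1 : Matrix (Sub0 n₂) (Sub0 n₂) ℝ) + Nres G₂) := by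
  ext x y
  cases x with
  | inl u =>
    cases y with
    | inl u' =>
      -- top-left block : n₂ • L₁
      have : (Matrix.reindex (lexEquiv n₁ n₂) (lexEquiv n₁ n₂) (conjLap G₁ G₂))
          (Sum.inl u) (Sum.inl u') = conjLap G₁ G₂ (u, 0) (u', 0) := rfl
      rw [this, conjLap_apply]
      rw [Nmat_apply, Kmat_apply]
      simp only [if_pos rfl]
      by_cases hu : u = u'
      · subst hu
        have : ¬ G₁.Adj u u := G₁.irrefl
        simp [this, SimpleGraph.lapMatrix, SimpleGraph.degMatrix]
      · simp only [if_neg hu]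
        by_cases ha : G₁.Adj u u'
        · simp [ha, hu, SimpleGraph.lapMatrix, SimpleGraph.degMatrix]
        · simp [ha, hu, SimpleGraph.lapMatrix, SimpleGraph.degMatrix]
    | inr p => rfl
  | inr p =>
    obtain ⟨s, w⟩ := p
    cases y with
    | inl u' =>
      have : (Matrix.reindex (lexEquiv n₁ n₂) (lexEquiv n₁ n₂) (conjLap G₁ G₂))
          (Sum.inr (s, w)) (Sum.inl u') = conjLap G₁ G₂ (w, s.1) (u', 0) := rfl
      rw [this, conjLap_apply, Nmat_apply, Kmat_apply]
      simp [s.2]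
    | inr p' =>
      obtain ⟨s', w'⟩ := p'
      have : (Matrix.reindex (lexEquiv n₁ n₂) (lexEquiv n₁ n₂) (conjLap G₁ G₂))
          (Sum.inr (s, w)) (Sum.inr (s', w')) = conjLap G₁ G₂ (w, s.1) (w', s'.1) := rfl
      rw [this, conjLap_apply, Kmat_apply]
      simp only [Matrix.fromBlocks_apply₂₂, Matrix.blockDiagonal_apply,
        Matrix.add_apply, Matrix.smul_apply, Matrix.one_apply, smul_eq_mul,
        if_neg s.2, mul_zero, sub_zero]
      by_cases hw : w = w'
      · subst hw
        have hss : (s = s') ↔ ((s : Fin n₂) = (s' : Fin n₂)) := by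
          constructor
          · intro h; rw [h]
          · intro h; exact Subtype.ext h
        by_cases hs : s = s'
        · simp [hs, Nres, mul_one]
        · have : ¬ ((s : Fin n₂) = (s' : Fin n₂)) := fun h => hs (Subtype.ext h)
          simp [hs,‹¬ ((s : Fin n₂) = (s' : Fin n₂))›, Nres]
      · simp [hw, Nres]

/-- Equivalence splitting off the zero index. -/
def subEquiv (n₂ : ℕ) [NeZero n₂] : Fin n₂ ≃ Unit ⊕ Sub0 n₂ where
  toFun j := if h : j = 0 then Sum.inl () else Sum.inr ⟨j, h⟩
  invFun := Sum.elim (fun _ => 0) (fun s => s.1)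
  left_inv := by intro j; by_cases h : j = 0 <;> simp [h]
  right_inv := by
    rintro (u | s)
    · simp
    · exact dif_neg s.2

lemma charpoly_Nres (G₂ : SimpleGraph (Fin n₂)) [DecidableRel G₂.Adj]
    (lam2 : Fin n₂ → ℝ)
    (hlam2 : (G₂.lapMatrix ℝ).charpoly = ∏ j, (X - C (lam2 j)))
    (h0 : lam2 0 = 0) :
    (Nres G₂).charpoly = ∏ s : Sub0 n₂, (X - C (lam2 s.1)) := by
  have hN : (Nmat G₂).charpoly = (G₂.lapMatrix ℝ).charpoly := by
    have : Nmat G₂ = Qinv n₂ * G₂.lapMatrix ℝ * Qmat n₂ := by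
      rw [Nmat, Matrix.mul_assoc]
    rw [this]
    exact charpoly_conj (Qinv n₂) (Qmat n₂) _ Qinv_mul_Qmat Qmat_mul_Qinv
  have hreidx : Matrix.reindex (subEquiv n₂) (subEquiv n₂) (Nmat G₂) =
      Matrix.fromBlocks (0 : Matrix Unit Unit ℝ)
        (Matrix.of fun _ (s : Sub0 n₂) => Nmat G₂ 0 s.1) 0 (Nres G₂) := by
    ext x y
    cases x with
    | inl u =>
      cases y with
      | inl u' =>
        have : (Matrix.reindex (subEquiv n₂) (subEquiv n₂) (Nmat G₂)) (Sum.inl u) (Sum.inl u')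
            = Nmat G₂ 0 0 := rfl
        rw [this, Nmat_apply]
        simp
      | inr s => rfl
    | inr s =>
      cases y with
      | inl u' =>
        have : (Matrix.reindex (subEquiv n₂) (subEquiv n₂) (Nmat G₂)) (Sum.inr s) (Sum.inl u')
            = Nmat G₂ s.1 0 := rfl
        rw [this, Nmat_apply]
        simp
      | inr s' => rfl
  have hXmul : (X : ℝ[X]) * (Nres G₂).charpoly = X * ∏ s : Sub0 n₂, (X - C (lam2 s.1)) := by
    have h1 : (Nmat G₂).charpoly = X * (Nres G₂).charpoly := by
      rw [← Matrix.charpoly_reindex (subEquiv n₂), hreidx, Matrix.charpoly_fromBlocks_zero₂₁]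
      congr 1
      have hz : (0 : Matrix Unit Unit ℝ) = Matrix.diagonal (fun _ => (0:ℝ)) := by simp
      rw [hz, charpoly_diagonal]
      simp
    have h2 : (G₂.lapMatrix ℝ).charpoly = X * ∏ s : Sub0 n₂, (X - C (lam2 s.1)) := by
      rw [hlam2, ← Finset.mul_prod_erase Finset.univ _ (Finset.mem_univ (0 : Fin n₂)), h0]
      congr 1
      · simp
      · exact Finset.prod_subtype (Finset.univ.erase 0)
          (fun x => by simp [Finset.mem_erase]) (fun j => X - C (lam2 j))
    rw [← h1, hN, h2]
  exact mul_left_cancel₀ Polynomial.X_ne_zero hXmul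

lemma charpoly_block (G₂ : SimpleGraph (Fin n₂)) [DecidableRel G₂.Adj]
    (lam2 : Fin n₂ → ℝ)
    (hlam2 : (G₂.lapMatrix ℝ).charpoly = ∏ j, (X - C (lam2 j)))
    (h0 : lam2 0 = 0) (c : ℝ) :
    (c • (1 : Matrix (Sub0 n₂) (Sub0 n₂) ℝ) + Nres G₂).charpoly =
      ∏ s : Sub0 n₂, (X - C (lam2 s.1 + c)) := by
  rw [charpoly_smul_one_add, charpoly_Nres G₂ lam2 hlam2 h0]
  have hc : ∀ p : ℝ[X], p.comp (X - C c) = eval₂RingHom C (X - C c) p := fun _ => rfl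
  rw [hc, map_prod]
  refine Finset.prod_congr rfl fun s _ => ?_
  simp only [map_sub, coe_eval₂RingHom, eval₂_X, eval₂_C]
  rw [sub_sub, ← C_add, add_comm]

lemma charpoly_lap_lexProd (G₁ : SimpleGraph (Fin n₁)) (G₂ : SimpleGraph (Fin n₂))
    [DecidableRel G₁.Adj] [DecidableRel G₂.Adj]
    (lam1 : Fin n₁ → ℝ)
    (hlam1 : (G₁.lapMatrix ℝ).charpoly = ∏ i, (X - C (lam1 i)))
    (lam2 : Fin n₂ → ℝ)
    (hlam2 : (G₂.lapMatrix ℝ).charpoly = ∏ j, (X - C (lam2 j)))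
    (h0 : lam2 0 = 0) :
    ((lexProd G₁ G₂).lapMatrix ℝ).charpoly =
      (∏ i, (X - C ((n₂ : ℝ) * lam1 i))) *
        ∏ p : Sub0 n₂ × Fin n₁, (X - C (lam2 p.1.1 + (n₂ : ℝ) * (G₁.degree p.2 : ℝ))) := by
  rw [← charpoly_conjLap, ← Matrix.charpoly_reindex (lexEquiv n₁ n₂), reindex_conjLap,
    Matrix.charpoly_fromBlocks_zero₂₁, charpoly_blockDiagonal]
  congr 1
  · exact charpoly_smul_of_factors (n₂ : ℝ) (Nat.cast_ne_zero.mpr (NeZero.ne n₂)) _ lam1 hlam1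
  · rw [Fintype.prod_prod_type]
    rw [Finset.prod_comm]
    refine Finset.prod_congr rfl fun u _ => ?_
    rw [charpoly_block G₂ lam2 hlam2 h0]

lemma sum_transfer {α β γ : Type*} [Fintype α] [Fintype β] [Fintype γ]
    (f : α → ℝ) (g : β → ℝ) (h : γ → ℝ)
    (heq : ∏ a, (X - C (f a)) = (∏ b, (X - C (g b))) * ∏ c, (X - C (h c)))
    (F : ℝ → ℝ) : ∑ a, F (f a) = (∑ b, F (g b)) + ∑ c, F (h c) := by
  have e1 : (∏ a, (X - C (f a))).roots = Finset.univ.val.map f := by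
    rw [show (∏ a, (X - C (f a))) = ((Finset.univ.val.map f).map fun x : ℝ => X - C x).prod by
      rw [Multiset.map_map]; rfl, roots_multiset_prod_X_sub_C]
  have e2 : (∏ b, (X - C (g b))).roots = Finset.univ.val.map g := by
    rw [show (∏ b, (X - C (g b))) = ((Finset.univ.val.map g).map fun x : ℝ => X - C x).prod by
      rw [Multiset.map_map]; rfl, roots_multiset_prod_X_sub_C]
  have e3 : (∏ c, (X - C (h c))).roots = Finset.univ.val.map h := by
    rw [show (∏ c, (X - C (h c))) = ((Finset.univ.val.map h).map fun x : ℝ => X - C x).prod by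
      rw [Multiset.map_map]; rfl, roots_multiset_prod_X_sub_C]
  have hg0 : (∏ b, (X - C (g b))) ≠ 0 :=
    (monic_prod_of_monic _ _ fun _ _ => monic_X_sub_C _).ne_zero
  have hh0 : (∏ c, (X - C (h c))) ≠ 0 :=
    (monic_prod_of_monic _ _ fun _ _ => monic_X_sub_C _).ne_zero
  have h' := congrArg Polynomial.roots heq
  rw [e1, Polynomial.roots_mul (mul_ne_zero hg0 hh0), e2, e3] at h'
  have : ((Finset.univ.val.map f).map F).sum =
      ((Finset.univ.val.map g).map F).sum + ((Finset.univ.val.map h).map F).sum := by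
    rw [h', Multiset.map_add, Multiset.sum_add]
  rw [Multiset.map_map, Multiset.map_map, Multiset.map_map] at this
  exact this

end Qmat

end Aux

/-- Sharma–Mittal entropy of the lexicographic product `G₁ • G₂` with `G₁` connected on
`n₁ ≥ 2` vertices with Laplacian eigenvalues `lam1` and `G₂` any graph on `n₂` vertices with
Laplacian eigenvalues `lam2` listed in nondecreasing order; the Laplacian eigenvalues of the
product are `n₂·λ⁽¹⁾ᵢ` together with `λ⁽²⁾ⱼ + n₂·deg(uᵢ)` for `j ≥ 2`. -/
theorem lapSM_lexProd {n₁ n₂ : ℕ} (hn₁ : 2 ≤ n₁) (hn₂ : 1 ≤ n₂)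
    (G₁ : SimpleGraph (Fin n₁)) (G₂ : SimpleGraph (Fin n₂))
    [DecidableRel G₁.Adj] [DecidableRel G₂.Adj]
    (hconn : G₁.Connected)
    (lam1 : Fin n₁ → ℝ)
    (hlam1 : (G₁.lapMatrix ℝ).charpoly = ∏ i, (Polynomial.X - Polynomial.C (lam1 i)))
    (lam2 : Fin n₂ → ℝ) (hlam2mono : Monotone lam2)
    (hlam2 : (G₂.lapMatrix ℝ).charpoly = ∏ j, (Polynomial.X - Polynomial.C (lam2 j)))
    (q r : ℝ) (hq0 : 0 < q) (hq1 : q ≠ 1) (hr : r ≠ 1) :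
    lapSM (lexProd G₁ G₂) q r =
      (1 / (1 - r)) *
        ((1 / (degSum (lexProd G₁ G₂) : ℝ)) ^ (q * (1 - r) / (1 - q)) *
          ((∑ i, ((n₂ : ℝ) * lam1 i) ^ q) +
            ∑ j ∈ Finset.univ.filter (fun j : Fin n₂ => j.val ≠ 0), ∑ i,
              (lam2 j + (n₂ : ℝ) * (G₁.degree i : ℝ)) ^ q)
            ^ ((1 - r) / (1 - q)) - 1) := by
  haveI : NeZero n₂ := ⟨by omega⟩
  set G := lexProd G₁ G₂ with hG
  -- facts about lam2
  have hlam2eig : Finset.univ.val.map lam2 =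
      Finset.univ.val.map (lap_isHermitian G₂).eigenvalues := by
    apply multiset_map_eq_of_prod_eq
    rw [← hlam2, isHermitian_charpoly_eq (lap_isHermitian G₂)]
  have hlam2nonneg : ∀ j, 0 ≤ lam2 j := by
    intro j
    have hmem : lam2 j ∈ Finset.univ.val.map lam2 :=
      Multiset.mem_map_of_mem _ (Finset.mem_univ j)
    rw [hlam2eig, Multiset.mem_map] at hmem
    obtain ⟨v, _, hv⟩ := hmem
    rw [← hv]
    exact (SimpleGraph.posSemidef_lapMatrix ℝ G₂).eigenvalues_nonneg v
  have hdet0 : (G₂.lapMatrix ℝ).det = 0 := by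
    rw [← Matrix.exists_mulVec_eq_zero_iff]
    refine ⟨fun _ => 1, ?_, G₂.lapMatrix_mulVec_const_eq_zero⟩
    intro hzero
    have := congrFun hzero ⟨0, by omega⟩
    simp at this
  have hexzero : ∃ j, lam2 j = 0 := by
    have hprod : ∏ v, (lap_isHermitian G₂).eigenvalues v = 0 := by
      have := (lap_isHermitian G₂).det_eq_prod_eigenvalues
      rw [hdet0] at this
      exact_mod_cast this.symm
    obtain ⟨v, _, hv⟩ := Finset.prod_eq_zero_iff.mp hprod
    have hmem : (0:ℝ) ∈ Finset.univ.val.map (lap_isHermitian G₂).eigenvalues := by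
      rw [← hv]
      exact Multiset.mem_map_of_mem _ (Finset.mem_univ v)
    rw [← hlam2eig, Multiset.mem_map] at hmem
    obtain ⟨j, _, hj⟩ := hmem
    exact ⟨j, hj⟩
  have h0 : lam2 0 = 0 := by
    obtain ⟨j, hj⟩ := hexzero
    have hle : (0 : Fin n₂) ≤ j := by
      rw [Fin.le_def]
      simp
    exact le_antisymm (hj ▸ hlam2mono hle) (hlam2nonneg 0)
  -- positivity of the degree sum
  have hdpos : 0 < (degSum G : ℝ) := by
    have hadj : ∃ a b, G₁.Adj a b := by
      have hne : (⟨0, by omega⟩ : Fin n₁) ≠ ⟨1, by omega⟩ := by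
        intro h; simpa using congrArg Fin.val h
      obtain ⟨w⟩ := hconn.preconnected ⟨0, by omega⟩ ⟨1, by omega⟩
      cases w with
      | cons h p => exact ⟨_, _, h⟩
    obtain ⟨a, b, hab⟩ := hadj
    have hdeg : 0 < G.degree (a, 0) := by
      rw [SimpleGraph.degree_pos_iff_exists_adj]
      exact ⟨(b, 0), Or.inl hab⟩
    have : 0 < degSum G :=
      Finset.sum_pos' (fun _ _ => Nat.zero_le _) ⟨(a, 0), Finset.mem_univ _, hdeg⟩
    exact_mod_cast this
  -- the eigenvalue transfer
  have hchar := charpoly_lap_lexProd G₁ G₂ lam1 hlam1 lam2 hlam2 h0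
  have htrans := sum_transfer (lap_isHermitian G).eigenvalues
    (fun i => (n₂ : ℝ) * lam1 i)
    (fun p : Sub0 n₂ × Fin n₁ => lam2 p.1.1 + (n₂ : ℝ) * (G₁.degree p.2 : ℝ))
    (by rw [← isHermitian_charpoly_eq (lap_isHermitian G)]; exact hchar)
    (fun x => x ^ q)
  have heignn : ∀ v, 0 ≤ (lap_isHermitian G).eigenvalues v :=
    fun v => (SimpleGraph.posSemidef_lapMatrix ℝ G).eigenvalues_nonneg v
  have hfilter : ∀ F : Fin n₂ → ℝ,
      ∑ s : Sub0 n₂, F s.1 =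
        ∑ j ∈ Finset.univ.filter (fun j : Fin n₂ => j.val ≠ 0), F j :=
    fun F => (Finset.sum_subtype _ (fun x => by rw [Finset.mem_filter]; exact ⟨fun h => Fin.val_ne_zero_iff.mp h.2, fun h => ⟨Finset.mem_univ _, Fin.val_ne_zero_iff.mpr h⟩⟩) F).symm
  have hS : ∑ v, (lap_isHermitian G).eigenvalues v ^ q =
      (∑ i, ((n₂ : ℝ) * lam1 i) ^ q) +
        ∑ j ∈ Finset.univ.filter (fun j : Fin n₂ => j.val ≠ 0), ∑ i,
          (lam2 j + (n₂ : ℝ) * (G₁.degree i : ℝ)) ^ q := by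
    rw [htrans]
    congr 1
    rw [Fintype.sum_prod_type]
    exact hfilter (fun j => ∑ i, (lam2 j + (n₂ : ℝ) * (G₁.degree i : ℝ)) ^ q)
  have hdnn : (0:ℝ) ≤ 1 / (degSum G : ℝ) := by positivity
  have hterm : ∀ v : Fin n₁ × Fin n₂, lapDensityEigen G v ^ q =
      (1 / (degSum G : ℝ)) ^ q * ((lap_isHermitian G).eigenvalues v ^ q) := by
    intro v
    simp only [lapDensityEigen]
    rw [div_eq_mul_one_div, Real.mul_rpow (heignn v) hdnn, mul_comm]
  have hsum : ∑ v, lapDensityEigen G v ^ q =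
      (1 / (degSum G : ℝ)) ^ q *
        ((∑ i, ((n₂ : ℝ) * lam1 i) ^ q) +
          ∑ j ∈ Finset.univ.filter (fun j : Fin n₂ => j.val ≠ 0), ∑ i,
            (lam2 j + (n₂ : ℝ) * (G₁.degree i : ℝ)) ^ q) := by
    rw [Finset.sum_congr rfl fun v _ => hterm v, ← Finset.mul_sum, hS]
  have hSnn : 0 ≤ (∑ i, ((n₂ : ℝ) * lam1 i) ^ q) +
      ∑ j ∈ Finset.univ.filter (fun j : Fin n₂ => j.val ≠ 0), ∑ i,
        (lam2 j + (n₂ : ℝ) * (G₁.degree i : ℝ)) ^ q := by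
    rw [← hS]
    exact Finset.sum_nonneg fun v _ => Real.rpow_nonneg (heignn v) q
  show (1 / (1 - r)) *
      ((∑ v, lapDensityEigen G v ^ q) ^ ((1 - r) / (1 - q)) - 1) = _
  rw [hsum, Real.mul_rpow (Real.rpow_nonneg hdnn q) hSnn, ← Real.rpow_mul hdnn,
    ← mul_div_assoc]


end SMG
end
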